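/- Let k ≥ 1 and let k_1,…,k_n be positive integers with k_1 + ⋯ + k_n = 2k. Over candidates {A,B,C,D}, consider the incomplete weighted profile consisting of: one voter of weight 1 with fixed vote C>D>B>A, one voter of weight 2k−1 with fixed vote C>D>A>B, one voter of weight 2k−1 with fixed vote D>B>C>A, one voter of weight 2k_1 with fixed vote D>B>A>C, and for each i ∈ {2,…,n} a voter of weight 2k_i whose vote is constrained only to rank A above C. Then: (i) in every completion, A beats C in pairwise majority, D beats A in pairwise majority, and D beats B in pairwise majority; consequently, in every completion the winner of the cup rule with agenda ((A vs B), then C, then D) is either C or D; and (ii) there exists a completion under which D is the cup winner. -/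

import Mathlib

/-!
Over candidates {A,B,C,D}, with the incomplete weighted profile of the
cup-rule reduction: (i) in every completion, A beats C, D beats A and D
beats B in pairwise majority, hence the winner of the cup with agenda
((A vs B), then C, then D) is C or D; (ii) some completion makes D the
cup winner.
-/

namespace Stmt1

inductive Cand where
  | A | B | C | D
deriving DecidableEq

open Cand

/-- `above l x y` : in the vote given by list `l` (best candidate first),
`x` is ranked above `y`. -/
def above (l : List Cand) (x y : Cand) : Prop := l.idxOf x < l.idxOf y

instance (l : List Cand) (x y : Cand) : Decidable (above l x y) :=
  inferInstanceAs (Decidable (_ < _))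

/-- Total weight of voters ranking `x` above `y`.  The voter of index `i0`
has the fixed vote `D>B>A>C` of weight `2 * kk i0`; the completion `f` gives
the votes of the remaining constrained voters. -/
def N (k : ℕ) {n : ℕ} (kk : Fin n → ℕ) (i0 : Fin n) (f : Fin n → List Cand)
    (x y : Cand) : ℕ :=
  (if above [C, D, B, A] x y then 1 else 0)
  + (if above [C, D, A, B] x y then 2 * k - 1 else 0)
  + (if above [D, B, C, A] x y then 2 * k - 1 else 0)
  + (if above [D, B, A, C] x y then 2 * kk i0 else 0)
  + ∑ i ∈ Finset.univ.erase i0, (if above (f i) x y then 2 * kk i else 0)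

/-- Winner of the cup with agenda ((A vs B), then C, then D). -/
def cupWinner (N : Cand → Cand → ℕ) : Cand :=
  let w1 := if N A B > N B A then A else B
  let w2 := if N w1 C > N C w1 then w1 else C
  if N w2 D > N D w2 then w2 else D

theorem winner_is_C_or_D_and_D_possible
    (k n : ℕ) (hk : 1 ≤ k) (hn : 0 < n) (kk : Fin n → ℕ) (hpos : ∀ i, 1 ≤ kk i)
    (hsum : ∑ i, kk i = 2 * k) :
    ((∀ f : Fin n → List Cand,
        (∀ i, i ≠ (⟨0, hn⟩ : Fin n) →
            (f i).Perm [A, B, C, D] ∧ above (f i) A C) →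
        (N k kk ⟨0, hn⟩ f A C > N k kk ⟨0, hn⟩ f C A ∧
         N k kk ⟨0, hn⟩ f D A > N k kk ⟨0, hn⟩ f A D ∧
         N k kk ⟨0, hn⟩ f D B > N k kk ⟨0, hn⟩ f B D) ∧
        (cupWinner (N k kk ⟨0, hn⟩ f) = C ∨ cupWinner (N k kk ⟨0, hn⟩ f) = D))
      ∧
      (∃ f : Fin n → List Cand,
        (∀ i, i ≠ (⟨0, hn⟩ : Fin n) →
            (f i).Perm [A, B, C, D] ∧ above (f i) A C) ∧
        cupWinner (N k kk ⟨0, hn⟩ f) = D)) := by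
  set i0 : Fin n := ⟨0, hn⟩ with hi0
  set E : ℕ := ∑ i ∈ Finset.univ.erase i0, 2 * kk i with hEdef
  have hE : 2 * kk i0 + E = 4 * k := by
    have h1 : kk i0 + ∑ i ∈ Finset.univ.erase i0, kk i = ∑ i, kk i :=
      Finset.add_sum_erase Finset.univ kk (Finset.mem_univ i0)
    have h2 : E = 2 * ∑ i ∈ Finset.univ.erase i0, kk i := by
      rw [hEdef, Finset.mul_sum]
    omega
  have hk0 : 1 ≤ kk i0 := hpos i0
  have hbd : ∀ (f : Fin n → List Cand) (x y : Cand),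
      ∑ i ∈ Finset.univ.erase i0, (if above (f i) x y then 2 * kk i else 0) ≤ E := by
    intro f x y
    apply Finset.sum_le_sum
    intro i _
    split <;> omega
  constructor
  · intro f hf
    have hSAC : ∑ i ∈ Finset.univ.erase i0, (if above (f i) A C then 2 * kk i else 0) = E :=
      Finset.sum_congr rfl fun i hi => if_pos (hf i (Finset.ne_of_mem_erase hi)).2
    have hSCA : ∑ i ∈ Finset.univ.erase i0, (if above (f i) C A then 2 * kk i else 0) = 0 := by
      apply Finset.sum_eq_zero
      intro i hi
      rw [if_neg]
      have h := (hf i (Finset.ne_of_mem_erase hi)).2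
      simp only [above] at h ⊢
      omega
    have hAC : N k kk i0 f A C = 2 * kk i0 + E := by
      simp only [N]; rw [hSAC]
      simp (config := { decide := true }) [above]
    have hCA : N k kk i0 f C A = 1 + (2*k-1) + (2*k-1) := by
      simp only [N]; rw [hSCA]
      simp (config := { decide := true }) [above]
    have hDA : 1 + (2*k-1) + (2*k-1) + 2 * kk i0 ≤ N k kk i0 f D A := by
      simp only [N]
      simp (config := { decide := true }) [above]
      all_goals omega
    have hAD : N k kk i0 f A D ≤ E := by
      have hb := hbd f A D
      simp only [above] at hb
      simp only [N]
      simp (config := { decide := true }) [above]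
      all_goals omega
    have hDB : 1 + (2*k-1) + (2*k-1) + 2 * kk i0 ≤ N k kk i0 f D B := by
      simp only [N]
      simp (config := { decide := true }) [above]
      all_goals omega
    have hBD : N k kk i0 f B D ≤ E := by
      have hb := hbd f B D
      simp only [above] at hb
      simp only [N]
      simp (config := { decide := true }) [above]
      all_goals omega
    have h1 : N k kk i0 f A C > N k kk i0 f C A := by omega
    have h2 : N k kk i0 f D A > N k kk i0 f A D := by omega
    have h3 : N k kk i0 f D B > N k kk i0 f B D := by omega
    refine ⟨⟨h1, h2, h3⟩, ?_⟩
    simp only [cupWinner]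
    split_ifs <;> first | (left; rfl) | (right; rfl) | (exfalso; omega)
  · refine ⟨fun _ => [A, B, C, D], fun i _ => ⟨List.Perm.refl _, by show above [A,B,C,D] A C; decide⟩, ?_⟩
    set f : Fin n → List Cand := fun _ => [A, B, C, D] with hfdef
    have hsumT : ∀ x y, above [A,B,C,D] x y →
        ∑ i ∈ Finset.univ.erase i0, (if above (f i) x y then 2 * kk i else 0) = E :=
      fun x y h => Finset.sum_congr rfl fun i _ => if_pos h
    have hsumF : ∀ x y, ¬ above [A,B,C,D] x y →
        ∑ i ∈ Finset.univ.erase i0, (if above (f i) x y then 2 * kk i else 0) = 0 :=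
      fun x y h => Finset.sum_eq_zero fun i _ => if_neg h
    have hAB : N k kk i0 f A B = (2*k-1) + E := by
      simp only [N]; rw [hsumT A B (by decide)]
      simp (config := { decide := true }) [above]
    have hBA : N k kk i0 f B A = 1 + (2*k-1) + 2 * kk i0 := by
      simp only [N]; rw [hsumF B A (by decide)]
      simp (config := { decide := true }) [above]
    have hAC : N k kk i0 f A C = 2 * kk i0 + E := by
      simp only [N]; rw [hsumT A C (by decide)]
      simp (config := { decide := true }) [above]
    have hCA : N k kk i0 f C A = 1 + (2*k-1) + (2*k-1) := by
      simp only [N]; rw [hsumF C A (by decide)]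
      simp (config := { decide := true }) [above]
    have hBC : N k kk i0 f B C = (2*k-1) + 2 * kk i0 + E := by
      simp only [N]; rw [hsumT B C (by decide)]
      simp (config := { decide := true }) [above]
    have hCB : N k kk i0 f C B = 1 + (2*k-1) := by
      simp only [N]; rw [hsumF C B (by decide)]
      simp (config := { decide := true }) [above]
    have hAD : N k kk i0 f A D = E := by
      simp only [N]; rw [hsumT A D (by decide)]
      simp (config := { decide := true }) [above]
    have hDA : N k kk i0 f D A = 1 + (2*k-1) + (2*k-1) + 2 * kk i0 := by
      simp only [N]; rw [hsumF D A (by decide)]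
      simp (config := { decide := true }) [above]
    have hBD : N k kk i0 f B D = E := by
      simp only [N]; rw [hsumT B D (by decide)]
      simp (config := { decide := true }) [above]
    have hDB : N k kk i0 f D B = 1 + (2*k-1) + (2*k-1) + 2 * kk i0 := by
      simp only [N]; rw [hsumF D B (by decide)]
      simp (config := { decide := true }) [above]
    simp only [cupWinner]
    split_ifs <;> first | rfl | (exfalso; omega)

end Stmt1
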